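/- A tree T with at least 2 vertices has Edge-compelling chromatic number 3 if and only if T has radius 2 or T is a double broom (and T is not a star or K_2). -/

import Mathlib

open SimpleGraph

/-- A proper coloring of `G` with `k` colors. -/
def ProperColoring {V : Type*} {k : ℕ} (G : SimpleGraph V) (c : V → Fin k) : Prop :=
  ∀ ⦃u v : V⦄, G.Adj u v → c u ≠ c v

/-- `f` selects a rainbow committee of the coloring `c`: one vertex of each color. -/
def IsRainbow {V : Type*} {k : ℕ} (c : V → Fin k) (f : Fin k → V) : Prop :=
  ∀ i : Fin k, c (f i) = i

/-- The coloring `c` compels property `P`: every rainbow committee has property `P`. -/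
def Compels {V : Type*} {k : ℕ} (c : V → Fin k) (P : Set V → Prop) : Prop :=
  ∀ f : Fin k → V, IsRainbow c f → P (Set.range f)

/-- The `P`-compelling chromatic number of `G`: the least number of colors in a proper
coloring, using every color, in which every rainbow committee has property `P`. -/
noncomputable def compellingChromNum {V : Type*} (G : SimpleGraph V) (P : Set V → Prop) : ℕ :=
  sInf {k : ℕ | ∃ c : V → Fin k,
    ProperColoring G c ∧ Function.Surjective c ∧ Compels c P}

/-- Property `Edge`: the set contains at least one edge of `G`. -/
def HasEdge {V : Type*} (G : SimpleGraph V) (S : Set V) : Prop :=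
  ∃ u ∈ S, ∃ v ∈ S, G.Adj u v

/-- The Edge-compelling chromatic number. -/
noncomputable def edgeCompellingChromNum {V : Type*} (G : SimpleGraph V) : ℕ :=
  compellingChromNum G (HasEdge G)

/-- The radius of a graph: the least `r` such that some vertex is within distance `r`
of every vertex. -/
noncomputable def graphRadius {V : Type*} (G : SimpleGraph V) : ℕ :=
  sInf {r : ℕ | ∃ u : V, ∀ v : V, G.dist u v ≤ r}

/-- `G` is a double broom: two stars, each with at least two vertices, with one leaf of
the first joined by an edge to one leaf of the second. Here `c, c'` are the star centers
and `x, y` the joined leaves. -/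
def IsDoubleBroom {V : Type*} (G : SimpleGraph V) : Prop :=
  ∃ c c' x y : V, c ≠ c' ∧ c ≠ y ∧ c' ≠ x ∧
    G.Adj c x ∧ G.Adj c' y ∧ G.Adj x y ∧
    ¬G.Adj c c' ∧ ¬G.Adj c y ∧ ¬G.Adj c' x ∧
    (∀ v : V, v ≠ c → v ≠ c' →
      ((G.Adj c v ∧ ¬G.Adj c' v) ∨ (G.Adj c' v ∧ ¬G.Adj c v))) ∧
    (∀ u v : V, G.Adj u v →
      u = c ∨ v = c ∨ u = c' ∨ v = c' ∨ (u = x ∧ v = y) ∨ (u = y ∧ v = x))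

set_option linter.unusedSectionVars false
set_option maxHeartbeats 1000000

namespace EC
variable {V : Type*} [Fintype V] {T : SimpleGraph V}


lemma walk_isPath_length_eq_dist (hT : T.IsTree) {u v : V} (p : T.Walk u v) (hp : p.IsPath) :
    p.length = T.dist u v := by
  classical
  refine le_antisymm ?_ (SimpleGraph.dist_le p)
  obtain ⟨w, hw⟩ := (hT.isConnected u v).exists_walk_length_eq_dist
  have h1 : (⟨p, hp⟩ : T.Path u v) = w.toPath := hT.IsAcyclic.path_unique _ _
  have h2 : p.length = (w.toPath : T.Walk u v).length :=
    congrArg (fun q : T.Path u v => (q : T.Walk u v).length) h1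
  rw [h2, ← hw]
  exact w.length_bypass_le

omit [Fintype V] in
lemma path_supports_eq (hT : T.IsTree) {u v : V} {p q : T.Walk u v}
    (hp : p.IsPath) (hq : q.IsPath) : p.support = q.support := by
  have h : (⟨p, hp⟩ : T.Path u v) = ⟨q, hq⟩ := hT.IsAcyclic.path_unique _ _
  exact congrArg (fun r : T.Path u v => (r : T.Walk u v).support) h

lemma exists_adj (hT : T.IsTree) (hcard : 2 ≤ Fintype.card V) (v : V) : ∃ w, T.Adj v w := by
  obtain ⟨u, hu⟩ := Fintype.exists_ne_of_one_lt_card (by omega) v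
  obtain ⟨p⟩ := hT.isConnected v u
  cases p with
  | nil => exact absurd rfl hu
  | cons h q => exact ⟨_, h⟩

omit [Fintype V] in
lemma not_triangle (hT : T.IsTree) {a b c : V} (hab : T.Adj a b) (hbc : T.Adj b c)
    (hac : T.Adj a c) : False := by
  have h1 : (Walk.cons hac Walk.nil : T.Walk a c).IsPath := by
    simp [Walk.cons_isPath_iff, hac.ne]
  have h2 : (Walk.cons hab (Walk.cons hbc Walk.nil) : T.Walk a c).IsPath := by
    simp [Walk.cons_isPath_iff, hab.ne, hac.ne, hbc.ne]
  have hs := path_supports_eq hT h1 h2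
  simp [Walk.support_cons] at hs

omit [Fintype V] in
lemma common_nbr_unique (hT : T.IsTree) {a b m m' : V} (hab : a ≠ b)
    (h1 : T.Adj a m) (h2 : T.Adj m b) (h3 : T.Adj a m') (h4 : T.Adj m' b) : m = m' := by
  have hp1 : (Walk.cons h1 (Walk.cons h2 Walk.nil) : T.Walk a b).IsPath := by
    simp [Walk.cons_isPath_iff, h1.ne, hab, h2.ne]
  have hp2 : (Walk.cons h3 (Walk.cons h4 Walk.nil) : T.Walk a b).IsPath := by
    simp [Walk.cons_isPath_iff, h3.ne, hab, h4.ne]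
  have hs := path_supports_eq hT hp1 hp2
  simp [Walk.support_cons] at hs
  exact hs

lemma exists_mid (hT : T.IsTree) {u v : V} (h2 : T.dist u v ≤ 2) (hne : u ≠ v)
    (hna : ¬ T.Adj u v) : ∃ w, T.Adj u w ∧ T.Adj w v := by
  obtain ⟨p, hp⟩ := (hT.isConnected u v).exists_walk_length_eq_dist
  cases p with
  | nil => exact absurd rfl hne
  | cons h q =>
    cases q with
    | nil => exact absurd h hna
    | cons h' r =>
      cases r with
      | nil => exact ⟨_, h, h'⟩
      | cons h'' s =>
        rw [← hp] at h2
        simp [Walk.length_cons] at h2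

omit [Fintype V] in
lemma dist_le_one_of_adj {u v : V} (h : T.Adj u v) : T.dist u v ≤ 1 := by
  simpa using SimpleGraph.dist_le (Walk.cons h Walk.nil)

omit [Fintype V] in
lemma dist_le_two_of_mid {u v w : V} (h1 : T.Adj u w) (h2 : T.Adj w v) : T.dist u v ≤ 2 := by
  simpa using SimpleGraph.dist_le (Walk.cons h1 (Walk.cons h2 Walk.nil))



lemma exists_leaf (hT : T.IsTree) (hcard : 2 ≤ Fintype.card V) :
    ∃ ℓ s : V, T.Adj ℓ s ∧ ∀ w, T.Adj ℓ w → w = s := by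
  classical
  have hne : Nonempty V := by
    have := Fintype.card_pos_iff.mp (by omega : 0 < Fintype.card V); exact this
  obtain ⟨⟨u, v⟩, hmax⟩ := Finite.exists_max (fun p : V × V => T.dist p.1 p.2)
  -- dist u v ≥ 1
  obtain ⟨a, b, hab⟩ := Fintype.exists_pair_of_one_lt_card (α := V) (by omega)
  have hd1 : 1 ≤ T.dist u v := by
    have h : T.dist a b ≤ T.dist u v := hmax (a, b)
    have := (hT.isConnected a b).pos_dist_of_ne hab
    omega
  have huv : u ≠ v := by
    intro h; subst h; simp [SimpleGraph.dist_self] at hd1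
  obtain ⟨w0, hw0⟩ := (hT.isConnected u v).exists_walk_length_eq_dist
  set P : T.Walk u v := (w0.toPath : T.Walk u v) with hPdef
  have hPpath : P.IsPath := w0.toPath.2
  cases hP : P with
  | nil => exact absurd rfl huv
  | cons h q =>
    rename_i s'
    refine ⟨u, s', h, ?_⟩
    intro w hw
    by_contra hws
    have hqpath : q.IsPath ∧ u ∉ q.support := by
      have := hPpath; rw [hP] at this
      exact ⟨this.of_cons, (Walk.cons_isPath_iff _ _ |>.mp this).2⟩
    by_cases hmem : w ∈ P.support
    · -- w on the path: then the prefix path u..w equals edge u-w, forcing w = s'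
      have hmem' : w ∈ q.support := by
        rw [hP, Walk.support_cons] at hmem
        rcases List.mem_cons.mp hmem with h1 | h1
        · exact absurd h1 hw.ne'
        · exact h1
      have htk : (q.takeUntil w hmem').IsPath := hqpath.1.takeUntil hmem'
      have hcons : (Walk.cons h (q.takeUntil w hmem')).IsPath := by
        rw [Walk.cons_isPath_iff]
        exact ⟨htk, fun hu => hqpath.2 (q.support_takeUntil_subset hmem' hu)⟩
      have hedge : (Walk.cons hw Walk.nil : T.Walk u w).IsPath := by
        simp [Walk.cons_isPath_iff, hw.ne]
      have hs := path_supports_eq hT hcons hedge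
      simp [Walk.support_cons] at hs
      have h6 := Walk.support_eq_cons (q.takeUntil w hmem')
      rw [hs] at h6
      exact hws (List.cons_eq_cons.mp h6).1
    · -- w off the path: extend to longer path, contradict maximality
      have hext : (Walk.cons hw.symm P).IsPath := by
        rw [Walk.cons_isPath_iff]; exact ⟨hPpath, hmem⟩
      have hlen := walk_isPath_length_eq_dist hT _ hext
      have hPlen : P.length = T.dist u v := by
        rw [hPdef, ← hw0]
        exact le_antisymm w0.length_bypass_le (by rw [hw0]; exact SimpleGraph.dist_le _)
      have h1 : T.dist u v + 1 = T.dist w v := by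
        rw [← hlen]; simp [Walk.length_cons, hPlen]
      have hcontra : T.dist w v ≤ T.dist u v := hmax (w, v)
      omega



lemma radius_le_two_of_cover (hT : T.IsTree) (hcard : 2 ≤ Fintype.card V) (u : V) (W : Set V)
    (hcov : ∀ ⦃x y : V⦄, T.Adj x y → x ∈ W ∨ y ∈ W)
    (hWu : ∀ w ∈ W, w = u ∨ T.Adj u w) :
    ∀ v, T.dist u v ≤ 2 := by
  intro v
  by_cases hv : v = u
  · simp [hv, SimpleGraph.dist_self]
  obtain ⟨w, hw⟩ := exists_adj hT hcard v
  rcases hcov hw with hvW | hwW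
  · rcases hWu v hvW with h | h
    · exact absurd h hv
    · exact le_trans (dist_le_one_of_adj h) (by omega)
  · rcases hWu w hwW with h | h
    · subst h
      exact le_trans (dist_le_one_of_adj hw.symm) (by omega)
    · exact dist_le_two_of_mid h hw.symm

lemma conc_of_dompair (hT : T.IsTree) {p q : V} (hpq : p ≠ q) (hnadj : ¬T.Adj p q)
    (hdom : ∀ v, v ≠ p → v ≠ q → T.Adj p v ∨ T.Adj q v) :
    (∃ u, ∀ v, T.dist u v ≤ 2) ∨ IsDoubleBroom T := by
  classical
  by_cases hcn : ∃ m, T.Adj p m ∧ T.Adj m q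
  · obtain ⟨m, hm1, hm2⟩ := hcn
    left
    refine ⟨m, fun v => ?_⟩
    by_cases h1 : v = m
    · simp [h1, SimpleGraph.dist_self]
    by_cases h2 : v = p
    · subst h2; exact le_trans (dist_le_one_of_adj hm1.symm) (by omega)
    by_cases h3 : v = q
    · subst h3; exact le_trans (dist_le_one_of_adj hm2) (by omega)
    rcases hdom v h2 h3 with h | h
    · exact dist_le_two_of_mid hm1.symm h
    · exact dist_le_two_of_mid hm2 h
  · right
    push_neg at hcn
    -- extract the middle vertices of the unique p-q path
    obtain ⟨w0⟩ := hT.isConnected p q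
    obtain ⟨x, y, hpx, hxy, hyq, hpy, hqx⟩ :
        ∃ x y : V, T.Adj p x ∧ T.Adj x y ∧ T.Adj y q ∧ ¬T.Adj p y ∧ ¬T.Adj q x := by
      have hPpath : (w0.toPath : T.Walk p q).IsPath := w0.toPath.2
      cases hP : (w0.toPath : T.Walk p q) with
      | nil => exact absurd rfl hpq
      | cons h rest =>
        rename_i x
        cases rest with
        | nil => exact absurd h hnadj
        | cons h2 rest2 =>
          rename_i y
          rw [hP] at hPpath
          have hxq : x ≠ q := fun he => hnadj (he ▸ h)
          have hyp : y ≠ p := by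
            intro he
            rw [Walk.cons_isPath_iff] at hPpath
            apply hPpath.2
            rw [Walk.support_cons]
            exact List.mem_cons_of_mem _ (he ▸ rest2.start_mem_support)
          have hyq' : y ≠ q := by
            intro he
            subst he
            exact hcn x h h2
          have hqy : T.Adj y q := by
            rcases hdom y hyp hyq' with hh | hh
            · -- shortcut p-y contradicts path uniqueness
              exfalso
              have hp1 : (Walk.cons hh Walk.nil : T.Walk p y).IsPath := by
                simp [Walk.cons_isPath_iff, hh.ne]
              have hp2 : (Walk.cons h (Walk.cons h2 Walk.nil) : T.Walk p y).IsPath := by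
                simp [Walk.cons_isPath_iff, h.ne, Ne.symm hyp, h2.ne]
              have hs := path_supports_eq hT hp1 hp2
              simp [Walk.support_cons] at hs
            · exact hh.symm
          have hpy : ¬T.Adj p y := fun hh => hcn y hh hqy
          have hqx : ¬T.Adj q x := fun hh => hcn x h hh.symm
          exact ⟨x, y, h, h2, hqy, hpy, hqx⟩
    -- now build the double broom structure
    have hpney : p ≠ y := fun he => hnadj (by rw [he]; exact hyq)
    have hqnex : q ≠ x := fun he => hnadj (by rw [he]; exact hpx)
    have hxneq : x ≠ q := fun he => hnadj (by rw [← he]; exact hpx)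
    have hPmain : (Walk.cons hpx (Walk.cons hxy (Walk.cons hyq Walk.nil)) :
        T.Walk p q).IsPath := by
      simp [Walk.cons_isPath_iff, hpx.ne, hpney, hpq, hxy.ne, hxneq, hyq.ne]
    refine ⟨p, q, x, y, hpq, hpney, hqnex, hpx, hyq.symm, hxy, hnadj, hpy,
      fun hh => hqx hh, ?_, ?_⟩
    · intro v hvp hvq
      rcases hdom v hvp hvq with hh | hh
      · exact Or.inl ⟨hh, fun h' => hcn v hh h'.symm⟩
      · exact Or.inr ⟨hh, fun h' => hcn v h' hh.symm⟩
    · intro u v huv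
      by_cases hup : u = p
      · exact Or.inl hup
      by_cases hvp : v = p
      · exact Or.inr (Or.inl hvp)
      by_cases huq : u = q
      · exact Or.inr (Or.inr (Or.inl huq))
      by_cases hvq : v = q
      · exact Or.inr (Or.inr (Or.inr (Or.inl hvq)))
      rcases hdom u hup huq with hu | hu <;> rcases hdom v hvp hvq with hv | hv
      · exact (not_triangle hT hu huv hv).elim
      · -- Adj p u, Adj q v : this is the x-y edge
        have hp2 : (Walk.cons hu (Walk.cons huv (Walk.cons hv.symm Walk.nil)) :
            T.Walk p q).IsPath := by
          simp [Walk.cons_isPath_iff, hu.ne, hpq, huv.ne, hv.ne, hup, hvp, huq, hvq, huv.ne',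
            Ne.symm hup, Ne.symm hvp, Ne.symm huq, Ne.symm hvq]
        have hs := path_supports_eq hT hp2 hPmain
        simp [Walk.support_cons] at hs
        exact Or.inr (Or.inr (Or.inr (Or.inr (Or.inl ⟨hs.1, hs.2⟩))))
      · -- Adj q u, Adj p v : reversed
        have hp2 : (Walk.cons hv (Walk.cons huv.symm (Walk.cons hu.symm Walk.nil)) :
            T.Walk p q).IsPath := by
          simp [Walk.cons_isPath_iff, hv.ne, hpq, huv.ne, hu.ne, hup, hvp, huq, hvq, huv.ne',
            Ne.symm hup, Ne.symm hvp, Ne.symm huq, Ne.symm hvq]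
        have hs := path_supports_eq hT hp2 hPmain
        simp [Walk.support_cons] at hs
        exact Or.inr (Or.inr (Or.inr (Or.inr (Or.inr ⟨hs.2, hs.1⟩))))
      · exact (not_triangle hT hu huv hv).elim


lemma core (hT : T.IsTree) (hcard : 2 ≤ Fintype.card V)
    (A B C : Set V)
    (hAB : ∀ v, v ∈ A → v ∈ B → False)
    (hAC : ∀ v, v ∈ A → v ∈ C → False)
    (hBC : ∀ v, v ∈ B → v ∈ C → False)
    (hCn : C.Nonempty)
    (hcover : ∀ v : V, v ∈ A ∨ v ∈ B ∨ v ∈ C)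
    (hAi : ∀ a ∈ A, ∀ a' ∈ A, ¬T.Adj a a')
    (hBi : ∀ b ∈ B, ∀ b' ∈ B, ¬T.Adj b b')
    (hCi : ∀ x ∈ C, ∀ x' ∈ C, ¬T.Adj x x')
    (htr : ∀ a ∈ A, ∀ b ∈ B, ∀ x ∈ C, T.Adj a b ∨ T.Adj a x ∨ T.Adj b x)
    (ℓ s : V) (hlA : ℓ ∈ A) (hsB : s ∈ B)
    (hleaf : ∀ w, T.Adj ℓ w → w = s) :
    (∃ u, ∀ v, T.dist u v ≤ 2) ∨ IsDoubleBroom T := by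
  classical
  have step1 : ∀ y ∈ B, y ≠ s → ∀ x ∈ C, T.Adj y x := by
    intro y hy hys x hx
    rcases htr ℓ hlA y hy x hx with h | h | h
    · exact absurd (hleaf _ h) hys
    · exact ((hBC s hsB ((hleaf _ h) ▸ hx)).elim)
    · exact h
  by_cases hBs : ∀ y ∈ B, y = s
  · -- B = {s}
    have hcomp : ∀ a ∈ A, ¬T.Adj a s → ∀ x ∈ C, ¬T.Adj x s → T.Adj a x := by
      intro a ha has x hx hxs
      rcases htr a ha s hsB x hx with h | h | h
      · exact absurd h has
      · exact h
      · exact absurd h.symm hxs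
    by_cases hA1 : ∀ a ∈ A, T.Adj a s
    · left
      refine ⟨s, radius_le_two_of_cover hT hcard s ({s} ∪ A) ?_ ?_⟩
      · intro a b hab
        rcases hcover a with ha | ha | ha
        · exact Or.inl (Or.inr ha)
        · exact Or.inl (Or.inl (hBs a ha))
        · rcases hcover b with hb | hb | hb
          · exact Or.inr (Or.inr hb)
          · exact Or.inr (Or.inl (hBs b hb))
          · exact (hCi a ha b hb hab).elim
      · intro w hw
        rcases hw with hw | hw
        · exact Or.inl hw
        · exact Or.inr (hA1 w hw).symm
    by_cases hC1 : ∀ x ∈ C, T.Adj x s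
    · left
      refine ⟨s, radius_le_two_of_cover hT hcard s ({s} ∪ C) ?_ ?_⟩
      · intro a b hab
        rcases hcover a with ha | ha | ha
        · rcases hcover b with hb | hb | hb
          · exact (hAi a ha b hb hab).elim
          · exact Or.inr (Or.inl (hBs b hb))
          · exact Or.inr (Or.inr hb)
        · exact Or.inl (Or.inl (hBs a ha))
        · exact Or.inl (Or.inr ha)
      · intro w hw
        rcases hw with hw | hw
        · exact Or.inl hw
        · exact Or.inr (hC1 w hw).symm
    · push_neg at hA1 hC1
      obtain ⟨a₀, ha₀A, ha₀s⟩ := hA1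
      obtain ⟨x₀, hx₀C, hx₀s⟩ := hC1
      by_cases h2a : ∀ a ∈ A, ¬T.Adj a s → a = a₀
      · refine conc_of_dompair hT (p := s) (q := a₀)
          (fun he => hAB a₀ ha₀A (he ▸ hsB)) (fun h => ha₀s h.symm) ?_
        intro v hvs hva
        rcases hcover v with hv | hv | hv
        · by_cases hvs' : T.Adj v s
          · exact Or.inl hvs'.symm
          · exact absurd (h2a v hv hvs') hva
        · exact absurd (hBs v hv) hvs
        · by_cases hvs' : T.Adj v s
          · exact Or.inl hvs'.symm
          · exact Or.inr (hcomp a₀ ha₀A ha₀s v hv hvs')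
      · push_neg at h2a
        obtain ⟨a₁, ha₁A, ha₁s, ha₁ne⟩ := h2a
        have hCx : ∀ x ∈ C, ¬T.Adj x s → x = x₀ := by
          intro x hx hxs
          exact common_nbr_unique hT (Ne.symm ha₁ne)
            (hcomp a₀ ha₀A ha₀s x hx hxs) ((hcomp a₁ ha₁A ha₁s x hx hxs).symm)
            (hcomp a₀ ha₀A ha₀s x₀ hx₀C hx₀s) ((hcomp a₁ ha₁A ha₁s x₀ hx₀C hx₀s).symm)
        refine conc_of_dompair hT (p := s) (q := x₀)
          (fun he => hBC s hsB (he ▸ hx₀C)) (fun h => hx₀s h.symm) ?_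
        intro v hvs hvx
        rcases hcover v with hv | hv | hv
        · by_cases hvs' : T.Adj v s
          · exact Or.inl hvs'.symm
          · exact Or.inr (hcomp v hv hvs' x₀ hx₀C hx₀s).symm
        · exact absurd (hBs v hv) hvs
        · by_cases hvs' : T.Adj v s
          · exact Or.inl hvs'.symm
          · exact absurd (hCx v hv hvs') hvx
  · push_neg at hBs
    obtain ⟨y₀, hy₀B, hy₀s⟩ := hBs
    obtain ⟨x₀, hx₀C⟩ := hCn
    by_cases hCsing : ∀ x ∈ C, x = x₀
    · -- C = {x₀}
      by_cases hsx : T.Adj s x₀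
      · left
        refine ⟨x₀, radius_le_two_of_cover hT hcard x₀ ({x₀} ∪ B) ?_ ?_⟩
        · intro a b hab
          rcases hcover a with ha | ha | ha
          · rcases hcover b with hb | hb | hb
            · exact (hAi a ha b hb hab).elim
            · exact Or.inr (Or.inr hb)
            · exact Or.inr (Or.inl (hCsing b hb))
          · exact Or.inl (Or.inr ha)
          · exact Or.inl (Or.inl (hCsing a ha))
        · intro w hw
          rcases hw with hw | hw
          · exact Or.inl hw
          · by_cases hws : w = s
            · exact Or.inr (hws ▸ hsx.symm)
            · exact Or.inr (step1 w hw hws x₀ hx₀C).symm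
      · refine conc_of_dompair hT (p := s) (q := x₀)
          (fun he => hBC s hsB (he ▸ hx₀C)) hsx ?_
        intro v hvs hvx
        rcases hcover v with hv | hv | hv
        · rcases htr v hv s hsB x₀ hx₀C with h | h | h
          · exact Or.inl h.symm
          · exact Or.inr h.symm
          · exact absurd h hsx
        · exact Or.inr (step1 v hv hvs x₀ hx₀C).symm
        · exact absurd (hCsing v hv) hvx
    · push_neg at hCsing
      obtain ⟨x₁, hx₁C, hx₁0⟩ := hCsing
      have hBsing : ∀ y ∈ B, y ≠ s → y = y₀ := by
        intro y hy hys
        exact common_nbr_unique hT hx₁0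
          ((step1 y hy hys x₁ hx₁C).symm) (step1 y hy hys x₀ hx₀C)
          ((step1 y₀ hy₀B hy₀s x₁ hx₁C).symm) (step1 y₀ hy₀B hy₀s x₀ hx₀C)
      have hCy₀ : ∀ x ∈ C, T.Adj y₀ x := fun x hx => step1 y₀ hy₀B hy₀s x hx
      have hsy₀ : s ≠ y₀ := Ne.symm hy₀s
      obtain ⟨x₁', hx₁'C, hx₁'s⟩ : ∃ x ∈ C, ¬T.Adj s x := by
        by_contra h
        push_neg at h
        exact hx₁0 (common_nbr_unique hT hsy₀ (h x₁ hx₁C) ((hCy₀ x₁ hx₁C).symm)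
          (h x₀ hx₀C) ((hCy₀ x₀ hx₀C).symm))
      have hA1 : ∀ a ∈ A, T.Adj a s ∨ T.Adj a x₁' := by
        intro a ha
        rcases htr a ha s hsB x₁' hx₁'C with h | h | h
        · exact Or.inl h
        · exact Or.inr h
        · exact absurd h hx₁'s
      by_cases hrest : ∀ x ∈ C, x ≠ x₁' → T.Adj s x
      · refine conc_of_dompair hT (p := s) (q := x₁')
          (fun he => hBC s hsB (he ▸ hx₁'C)) hx₁'s ?_
        intro v hvs hvx
        rcases hcover v with hv | hv | hv
        · rcases hA1 v hv with h | h
          · exact Or.inl h.symm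
          · exact Or.inr h.symm
        · have := hBsing v hv hvs
          exact Or.inr (this ▸ (hCy₀ x₁' hx₁'C).symm)
        · exact Or.inl (hrest v hv hvx)
      · push_neg at hrest
        obtain ⟨x₂', hx₂'C, hx₂'ne, hx₂'s⟩ := hrest
        have hAs : ∀ a ∈ A, T.Adj a s := by
          intro a ha
          by_contra h
          have h1 : T.Adj a x₁' := (hA1 a ha).resolve_left h
          have h2 : T.Adj a x₂' := by
            rcases htr a ha s hsB x₂' hx₂'C with hh | hh | hh
            · exact absurd hh h
            · exact hh
            · exact absurd hh hx₂'s
          have hay : a = y₀ := common_nbr_unique hT (Ne.symm hx₂'ne)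
            h1.symm h2 ((hCy₀ x₁' hx₁'C).symm) (hCy₀ x₂' hx₂'C)
          exact hAB a ha (hay ▸ hy₀B)
        refine conc_of_dompair hT hsy₀ (fun h => hBi s hsB y₀ hy₀B h) ?_
        intro v hvs hvy
        rcases hcover v with hv | hv | hv
        · exact Or.inl (hAs v hv).symm
        · exact absurd (hBsing v hv hvs) hvy
        · exact Or.inr (hCy₀ v hv)



lemma fin3_cases : ∀ i j k t : Fin 3, i ≠ j → j ≠ k → i ≠ k → (t = i ∨ t = j ∨ t = k) := by
  decide

lemma fin3_third : ∀ i j : Fin 3, i ≠ j → ∃ k, i ≠ k ∧ j ≠ k := by decide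

lemma conc_of_good (hT : T.IsTree) (hcard : 2 ≤ Fintype.card V) (c : V → Fin 3)
    (hp : ∀ ⦃u v : V⦄, T.Adj u v → c u ≠ c v) (hs : Function.Surjective c)
    (hcm : ∀ f : Fin 3 → V, (∀ i, c (f i) = i) →
      ∃ u ∈ Set.range f, ∃ v ∈ Set.range f, T.Adj u v) :
    (∃ u, ∀ v, T.dist u v ≤ 2) ∨ IsDoubleBroom T := by
  classical
  have htr3 : ∀ i j k : Fin 3, i ≠ j → j ≠ k → i ≠ k →
      ∀ a, c a = i → ∀ b, c b = j → ∀ x, c x = k →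
      T.Adj a b ∨ T.Adj a x ∨ T.Adj b x := by
    intro i j k hij hjk hik a ha b hb x hx
    by_contra hcon
    push_neg at hcon
    obtain ⟨n1, n2, n3⟩ := hcon
    set f : Fin 3 → V := fun t => if t = i then a else if t = j then b else x with hf
    have hrb : ∀ t, c (f t) = t := by
      intro t
      rcases fin3_cases i j k t hij hjk hik with ht | ht | ht <;> subst ht
      · simp [hf, ha]
      · simp [hf, Ne.symm hij, hb]
      · simp [hf, Ne.symm hik, Ne.symm hjk, hx]
    obtain ⟨u, hu, v, hv, huv⟩ := hcm f hrb
    have hmem : ∀ z ∈ Set.range f, z = a ∨ z = b ∨ z = x := by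
      rintro z ⟨t, rfl⟩
      simp only [hf]
      split_ifs <;> tauto
    have hne : ∀ z w, z = a ∨ z = b ∨ z = x → w = a ∨ w = b ∨ w = x → ¬T.Adj z w := by
      rintro z w (rfl | rfl | rfl) (rfl | rfl | rfl)
      · exact T.loopless.irrefl _
      · exact n1
      · exact n2
      · exact fun h => n1 h.symm
      · exact T.loopless.irrefl _
      · exact n3
      · exact fun h => n2 h.symm
      · exact fun h => n3 h.symm
      · exact T.loopless.irrefl _
    exact hne u v (hmem u hu) (hmem v hv) huv
  obtain ⟨ℓ, s, hadj, huniq⟩ := exists_leaf hT hcard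
  have hij : c ℓ ≠ c s := hp hadj
  obtain ⟨k, hik, hjk⟩ := fin3_third (c ℓ) (c s) hij
  refine core hT hcard {v | c v = c ℓ} {v | c v = c s} {v | c v = k}
    (fun v h1 h2 => hij (h1 ▸ h2 ▸ rfl)) ?_ ?_ (hs k) ?_ ?_ ?_ ?_ ?_ ℓ s rfl rfl huniq
  · exact fun v h1 h2 => hik ((h1 : c v = c ℓ) ▸ h2)
  · exact fun v h1 h2 => hjk ((h1 : c v = c s) ▸ h2)
  · intro v
    exact fin3_cases (c ℓ) (c s) k (c v) hij hjk hik
  · exact fun a ha a' ha' hadj' => hp hadj' (ha.trans ha'.symm)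
  · exact fun a ha a' ha' hadj' => hp hadj' (ha.trans ha'.symm)
  · exact fun a ha a' ha' hadj' => hp hadj' (ha.trans ha'.symm)
  · exact fun a ha b hb x hx => htr3 (c ℓ) (c s) k hij hjk hik a ha b hb x hx



lemma fin3_vals : ∀ t : Fin 3, t = 0 ∨ t = 1 ∨ t = 2 := by decide
lemma fin2_vals : ∀ t : Fin 2, t = 0 ∨ t = 1 := by decide

lemma mem3_radius (hT : T.IsTree) (hcard : 2 ≤ Fintype.card V) (u w : V)
    (hu : ∀ v, T.dist u v ≤ 2) (hw1 : w ≠ u) (hw2 : ¬T.Adj u w) :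
    ∃ c : V → Fin 3, (∀ ⦃a b : V⦄, T.Adj a b → c a ≠ c b) ∧ Function.Surjective c ∧
      (∀ f : Fin 3 → V, (∀ i, c (f i) = i) →
        ∃ x ∈ Set.range f, ∃ y ∈ Set.range f, T.Adj x y) := by
  classical
  refine ⟨fun v => if v = u then 0 else if T.Adj u v then 1 else 2, ?_, ?_, ?_⟩
  · intro a b hab hceq
    by_cases hau : a = u
    · by_cases hbu : b = u
      · rw [hau, hbu] at hab
        exact T.loopless.irrefl u hab
      · rw [hau] at hab
        simp [hau, hbu, hab] at hceq
    · by_cases hbu : b = u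
      · rw [hbu] at hab
        simp [hau, hbu, hab.symm] at hceq
      · by_cases haa : T.Adj u a
        · by_cases hba : T.Adj u b
          · exact not_triangle hT haa hab hba
          · simp [hau, hbu, haa, hba] at hceq
        · by_cases hba : T.Adj u b
          · simp [hau, hbu, haa, hba] at hceq
          · obtain ⟨ma, hma1, hma2⟩ := exists_mid hT (hu a) (Ne.symm hau) haa
            obtain ⟨mb, hmb1, hmb2⟩ := exists_mid hT (hu b) (Ne.symm hbu) hba
            have hp1 : (Walk.cons hmb1 (Walk.cons hmb2 Walk.nil) : T.Walk u b).IsPath := by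
              simp [Walk.cons_isPath_iff, hmb1.ne, Ne.symm hbu, hmb2.ne]
            have hp2 : (Walk.cons hma1 (Walk.cons hma2 (Walk.cons hab Walk.nil)) :
                T.Walk u b).IsPath := by
              have hmab : ma ≠ b := fun he => hba (he ▸ hma1)
              simp [Walk.cons_isPath_iff, hma1.ne, Ne.symm hau, Ne.symm hbu,
                hma2.ne, hmab, hab.ne]
            have hsup := path_supports_eq hT hp1 hp2
            simp [Walk.support_cons] at hsup
  · intro i
    rcases fin3_vals i with rfl | rfl | rfl
    · exact ⟨u, by simp⟩
    · obtain ⟨m, hm1, hm2⟩ := exists_mid hT (hu w) (Ne.symm hw1) hw2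
      exact ⟨m, by simp [Ne.symm hm1.ne, hm1]⟩
    · exact ⟨w, by simp [hw1, hw2]⟩
  · intro f hf
    have h0 : f 0 = u := by
      have := hf 0
      by_cases h : f 0 = u
      · exact h
      · by_cases h' : T.Adj u (f 0) <;> simp [h, h'] at this
    have h1 : T.Adj u (f 1) := by
      have := hf 1
      by_cases h : f 1 = u
      · simp [h] at this
      · by_cases h' : T.Adj u (f 1)
        · exact h'
        · simp [h, h'] at this
    exact ⟨f 0, ⟨0, rfl⟩, f 1, ⟨1, rfl⟩, h0 ▸ h1⟩



lemma mem3_db (hT : T.IsTree) (hdb : IsDoubleBroom T) :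
    ∃ c : V → Fin 3, (∀ ⦃a b : V⦄, T.Adj a b → c a ≠ c b) ∧ Function.Surjective c ∧
      (∀ f : Fin 3 → V, (∀ i, c (f i) = i) →
        ∃ x ∈ Set.range f, ∃ y ∈ Set.range f, T.Adj x y) := by
  classical
  obtain ⟨p, q, x, y, hpq, hpy, hqx, hpx, hqy, hxy, napq, napy, naqx, hone, hcls⟩ := hdb
  have hqp : q ≠ p := Ne.symm hpq
  have hxp : x ≠ p := Ne.symm hpx.ne
  have hyq : y ≠ q := Ne.symm hqy.ne
  have hyx : y ≠ x := Ne.symm hxy.ne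
  by_cases hz : ∃ z : V, z ≠ p ∧ z ≠ q ∧ z ≠ x ∧ z ≠ y
  · obtain ⟨z, hzp, hzq, hzx, hzy⟩ := hz
    set c : V → Fin 3 :=
      fun v => if v = p ∨ v = y then 0 else if v = q ∨ v = x then 1 else 2 with hc
    have h0 : ∀ w, (w = p ∨ w = y) → c w = 0 := by
      intro w hw; simp only [hc]; rw [if_pos hw]
    have h1 : ∀ w, ¬(w = p ∨ w = y) → (w = q ∨ w = x) → c w = 1 := by
      intro w hw1 hw2; simp only [hc]; rw [if_neg hw1, if_pos hw2]
    have h2 : ∀ w, ¬(w = p ∨ w = y) → ¬(w = q ∨ w = x) → c w = 2 := by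
      intro w hw1 hw2; simp only [hc]; rw [if_neg hw1, if_neg hw2]
    have i0 : ∀ w, c w = 0 → w = p ∨ w = y := by
      intro w h; simp only [hc] at h; split_ifs at h with u1 u2
      · exact u1
      · exact absurd h (by decide)
      · exact absurd h (by decide)
    have i1 : ∀ w, c w = 1 → w = q ∨ w = x := by
      intro w h; simp only [hc] at h; split_ifs at h with u1 u2
      · exact absurd h (by decide)
      · exact u2
      · exact absurd h (by decide)
    have i2 : ∀ w, c w = 2 → ¬(w = p ∨ w = y) ∧ ¬(w = q ∨ w = x) := by
      intro w h; simp only [hc] at h; split_ifs at h with u1 u2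
      · exact absurd h (by decide)
      · exact absurd h (by decide)
      · exact ⟨u1, u2⟩
    refine ⟨c, ?_, ?_, ?_⟩
    · intro a b hab hceq
      by_cases ha0 : a = p ∨ a = y
      · have hb0 := i0 b (by rw [← hceq]; exact h0 a ha0)
        rcases ha0 with rfl | rfl <;> rcases hb0 with rfl | rfl
        · exact T.loopless.irrefl _ hab
        · exact napy hab
        · exact napy hab.symm
        · exact T.loopless.irrefl _ hab
      · by_cases ha1 : a = q ∨ a = x
        · have hb1 := i1 b (by rw [← hceq]; exact h1 a ha0 ha1)
          rcases ha1 with rfl | rfl <;> rcases hb1 with rfl | rfl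
          · exact T.loopless.irrefl _ hab
          · exact naqx hab
          · exact naqx hab.symm
          · exact T.loopless.irrefl _ hab
        · have hb2 := i2 b (by rw [← hceq]; exact h2 a ha0 ha1)
          rcases hcls a b hab with h | h | h | h | h | h <;> tauto
    · intro i
      rcases fin3_vals i with rfl | rfl | rfl
      · exact ⟨p, h0 p (Or.inl rfl)⟩
      · exact ⟨q, h1 q (by tauto) (Or.inl rfl)⟩
      · exact ⟨z, h2 z (by tauto) (by tauto)⟩
    · intro f hf
      have hf0 := i0 (f 0) (hf 0)
      have hf1 := i1 (f 1) (hf 1)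
      have hf2 := i2 (f 2) (hf 2)
      rcases hf0 with he0 | he0 <;> rcases hf1 with he1 | he1
      · -- f0 = p, f1 = q : use f2
        have h2p : f 2 ≠ p := by tauto
        have h2q : f 2 ≠ q := by tauto
        rcases hone (f 2) h2p h2q with ⟨hh, -⟩ | ⟨hh, -⟩
        · exact ⟨f 0, ⟨0, rfl⟩, f 2, ⟨2, rfl⟩, by rw [he0]; exact hh⟩
        · exact ⟨f 1, ⟨1, rfl⟩, f 2, ⟨2, rfl⟩, by rw [he1]; exact hh⟩
      · exact ⟨f 0, ⟨0, rfl⟩, f 1, ⟨1, rfl⟩, by rw [he0, he1]; exact hpx⟩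
      · exact ⟨f 1, ⟨1, rfl⟩, f 0, ⟨0, rfl⟩, by rw [he0, he1]; exact hqy⟩
      · exact ⟨f 1, ⟨1, rfl⟩, f 0, ⟨0, rfl⟩, by rw [he0, he1]; exact hxy⟩
  · -- only the four vertices p, q, x, y
    push_neg at hz
    have hall : ∀ v : V, v = p ∨ v = q ∨ v = x ∨ v = y := by
      intro v
      by_contra h
      push_neg at h
      exact h.2.2.2 (hz v h.1 h.2.1 h.2.2.1)
    set c : V → Fin 3 := fun v => if v = x then 0 else if v = y then 1 else 2 with hc
    have h0 : c x = 0 := by simp [hc]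
    have h1 : c y = 1 := by simp [hc, hyx]
    have i0 : ∀ w, c w = 0 → w = x := by
      intro w h; simp only [hc] at h; split_ifs at h with u1 u2
      · exact u1
      · exact absurd h (by decide)
      · exact absurd h (by decide)
    have i1 : ∀ w, c w = 1 → w = y := by
      intro w h; simp only [hc] at h; split_ifs at h with u1 u2
      · exact absurd h (by decide)
      · exact u2
      · exact absurd h (by decide)
    have i2 : ∀ w, c w = 2 → w ≠ x ∧ w ≠ y := by
      intro w h; simp only [hc] at h; split_ifs at h with u1 u2
      · exact absurd h (by decide)
      · exact absurd h (by decide)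
      · exact ⟨u1, u2⟩
    refine ⟨c, ?_, ?_, ?_⟩
    · intro a b hab hceq
      by_cases ha0 : a = x
      · have hb0 := i0 b (by rw [← hceq, ha0, h0])
        rw [ha0, hb0] at hab
        exact T.loopless.irrefl _ hab
      · by_cases ha1 : a = y
        · have hb1 := i1 b (by rw [← hceq, ha1, h1])
          rw [ha1, hb1] at hab
          exact T.loopless.irrefl _ hab
        · have hca : c a = 2 := by simp only [hc]; rw [if_neg ha0, if_neg ha1]
          have hb2 := i2 b (by rw [← hceq]; exact hca)
          have hapq : a = p ∨ a = q := by rcases hall a with h|h|h|h <;> tauto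
          have hbpq : b = p ∨ b = q := by rcases hall b with h|h|h|h <;> tauto
          rcases hapq with rfl | rfl <;> rcases hbpq with rfl | rfl
          · exact T.loopless.irrefl _ hab
          · exact napq hab
          · exact napq hab.symm
          · exact T.loopless.irrefl _ hab
    · intro i
      rcases fin3_vals i with rfl | rfl | rfl
      · exact ⟨x, h0⟩
      · exact ⟨y, h1⟩
      · exact ⟨p, by simp only [hc]; rw [if_neg (Ne.symm hxp), if_neg hpy]⟩
    · intro f hf
      have he0 := i0 (f 0) (hf 0)
      have he1 := i1 (f 1) (hf 1)
      exact ⟨f 0, ⟨0, rfl⟩, f 1, ⟨1, rfl⟩, by rw [he0, he1]; exact hxy⟩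



/-- From a proper surjective compelling 2-coloring, the tree is a star. -/
lemma star_of_mem2 (hT : T.IsTree) (c : V → Fin 2)
    (hp : ∀ ⦃a b : V⦄, T.Adj a b → c a ≠ c b) (hs : Function.Surjective c)
    (hcm : ∀ f : Fin 2 → V, (∀ i, c (f i) = i) →
      ∃ x ∈ Set.range f, ∃ y ∈ Set.range f, T.Adj x y) :
    ∃ u : V, ∀ v, v ≠ u → T.Adj u v := by
  classical
  have hcomp : ∀ a b, c a = 0 → c b = 1 → T.Adj a b := by
    intro a b ha hb
    have hf : ∀ i : Fin 2, c ((fun t : Fin 2 => if t = 0 then a else b) i) = i := by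
      intro i
      rcases fin2_vals i with rfl | rfl
      · simpa using ha
      · simpa using hb
    obtain ⟨u', hu', v', hv', huv⟩ := hcm _ hf
    have hmem : ∀ z ∈ Set.range (fun t : Fin 2 => if t = 0 then a else b),
        z = a ∨ z = b := by
      rintro z ⟨t, rfl⟩
      simp only
      split_ifs <;> tauto
    rcases hmem u' hu' with rfl | rfl <;> rcases hmem v' hv' with rfl | rfl
    · exact absurd huv (T.loopless.irrefl _)
    · exact huv
    · exact huv.symm
    · exact absurd huv (T.loopless.irrefl _)
  obtain ⟨a₀, ha₀⟩ := hs 0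
  obtain ⟨b₀, hb₀⟩ := hs 1
  by_cases hA : ∀ a, c a = 0 → a = a₀
  · refine ⟨a₀, fun v hv => ?_⟩
    rcases fin2_vals (c v) with h | h
    · exact absurd (hA v h) hv
    · exact hcomp a₀ v ha₀ h
  · push_neg at hA
    obtain ⟨a₁, ha₁, ha₁ne⟩ := hA
    have hB : ∀ b, c b = 1 → b = b₀ := by
      intro b hb
      exact common_nbr_unique hT ha₁ne (hcomp a₁ b ha₁ hb) ((hcomp a₀ b ha₀ hb).symm)
        (hcomp a₁ b₀ ha₁ hb₀) ((hcomp a₀ b₀ ha₀ hb₀).symm)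
    refine ⟨b₀, fun v hv => ?_⟩
    rcases fin2_vals (c v) with h | h
    · exact (hcomp v b₀ h hb₀).symm
    · exact absurd (hB v h) hv
  
/-- A star admits a compelling 2-coloring. -/
lemma mem2_of_star (hT : T.IsTree) (hcard : 2 ≤ Fintype.card V) (u : V)
    (hstar : ∀ v, v ≠ u → T.Adj u v) :
    ∃ c : V → Fin 2, (∀ ⦃a b : V⦄, T.Adj a b → c a ≠ c b) ∧ Function.Surjective c ∧
      (∀ f : Fin 2 → V, (∀ i, c (f i) = i) →
        ∃ x ∈ Set.range f, ∃ y ∈ Set.range f, T.Adj x y) := by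
  classical
  refine ⟨fun v => if v = u then 0 else 1, ?_, ?_, ?_⟩
  · intro a b hab hceq
    by_cases ha : a = u <;> by_cases hb : b = u
    · rw [ha, hb] at hab; exact T.loopless.irrefl _ hab
    · simp [ha, hb] at hceq
    · simp [ha, hb] at hceq
    · exact not_triangle hT (hstar a ha) hab ((hstar b hb))
  · intro i
    rcases fin2_vals i with rfl | rfl
    · exact ⟨u, by simp⟩
    · obtain ⟨w, hw⟩ := Fintype.exists_ne_of_one_lt_card (by omega) u
      exact ⟨w, by simp [hw]⟩
  · intro f hf
    have h0 : f 0 = u := by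
      have := hf 0
      by_cases h : f 0 = u
      · exact h
      · simp [h] at this
    have h1 : f 1 ≠ u := by
      have := hf 1
      intro h
      simp [h] at this
    exact ⟨f 0, ⟨0, rfl⟩, f 1, ⟨1, rfl⟩, by rw [h0]; exact hstar _ h1⟩

lemma star_of_one_rad (hT : T.IsTree) {u : V} (h : ∀ v, T.dist u v ≤ 1) :
    ∀ v, v ≠ u → T.Adj u v := by
  intro v hv
  have h1 := h v
  have hpos := (hT.isConnected u v).pos_dist_of_ne (Ne.symm hv)
  have : T.dist u v = 1 := by omega
  exact (SimpleGraph.dist_eq_one_iff_adj).mp this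

lemma not_star_of_db (hdb : IsDoubleBroom T) :
    ¬ ∃ u : V, ∀ v, v ≠ u → T.Adj u v := by
  rintro ⟨u, hu⟩
  obtain ⟨p, q, x, y, hpq, hpy, hqx, hpx, hqy, hxy, napq, napy, naqx, hone, hcls⟩ := hdb
  by_cases hup : u = p
  · subst hup
    exact napq (hu q (fun h => hpq h.symm))
  · by_cases huq : u = q
    · subst huq
      exact napq (hu p (fun h => hpq h)).symm
    · rcases hone u hup huq with ⟨h1, h2⟩ | ⟨h1, h2⟩
      · exact h2 (hu q (fun h => huq h.symm)).symm
      · exact h2 (hu p (fun h => hup h.symm)).symm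


end EC

/-- A tree on at least two vertices has Edge-compelling chromatic number 3 iff it has
radius 2 or is a double broom. -/
theorem tree_edgeCompellingChromNum_eq_three_iff {V : Type*} [Fintype V]
    (T : SimpleGraph V) (hT : T.IsTree) (hcard : 2 ≤ Fintype.card V) :
    edgeCompellingChromNum T = 3 ↔ graphRadius T = 2 ∨ IsDoubleBroom T := by
  classical
  have hne : Nonempty V := Fintype.card_pos_iff.mp (by omega)
  set S : Set ℕ := {k : ℕ | ∃ c : V → Fin k,
    ProperColoring T c ∧ Function.Surjective c ∧ Compels c (HasEdge T)} with hS
  have hSdef : edgeCompellingChromNum T = sInf S := rfl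
  set R : Set ℕ := {r : ℕ | ∃ u : V, ∀ v : V, T.dist u v ≤ r} with hR
  have hRdef : graphRadius T = sInf R := rfl
  have h0 : 0 ∉ S := by
    rintro ⟨c, -, -, -⟩
    exact (c hne.some).elim0
  have h1 : 1 ∉ S := by
    rintro ⟨c, hp, -, -⟩
    obtain ⟨w, hw⟩ := EC.exists_adj hT hcard hne.some
    exact hp hw (Subsingleton.elim _ _)
  have h2star : 2 ∈ S ↔ ∃ u : V, ∀ v, v ≠ u → T.Adj u v := by
    constructor
    · rintro ⟨c, hp, hs, hcm⟩
      exact EC.star_of_mem2 hT c hp hs (fun f hf => hcm f hf)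
    · rintro ⟨u, hu⟩
      obtain ⟨c, hp, hs, hcm⟩ := EC.mem2_of_star hT hcard u hu
      exact ⟨c, hp, hs, hcm⟩
  have hone_rad : ∀ u : V, (∀ v, v ≠ u → T.Adj u v) → (1 : ℕ) ∈ R := by
    intro u hu
    refine ⟨u, fun v => ?_⟩
    by_cases hvu : v = u
    · simp [hvu, SimpleGraph.dist_self]
    · exact EC.dist_le_one_of_adj (hu v hvu)
  constructor
  · intro h
    have hSne : S.Nonempty := by
      by_contra hc
      rw [Set.not_nonempty_iff_eq_empty] at hc
      rw [hSdef, hc] at h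
      simp [Nat.sInf_empty] at h
    have h3 : 3 ∈ S := by
      have := Nat.sInf_mem hSne
      rwa [← hSdef, h] at this
    have h2 : 2 ∉ S := by
      intro hc
      have := Nat.sInf_le hc
      rw [← hSdef, h] at this
      omega
    obtain ⟨c, hp, hs, hcm⟩ := h3
    rcases EC.conc_of_good hT hcard c hp hs (fun f hf => hcm f hf) with ⟨u, hu⟩ | hdb
    · left
      have hr2 : (2 : ℕ) ∈ R := ⟨u, hu⟩
      have hr1 : (1 : ℕ) ∉ R := by
        rintro ⟨u', hu'⟩
        exact h2 (h2star.mpr ⟨u', EC.star_of_one_rad hT hu'⟩)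
      have hle := Nat.sInf_le hr2
      have hmem := Nat.sInf_mem (⟨2, hr2⟩ : R.Nonempty)
      rw [hRdef]
      rcases (by omega : sInf R = 0 ∨ sInf R = 1 ∨ sInf R = 2) with he | he | he
      · rw [he] at hmem
        obtain ⟨u'', hu''⟩ := hmem
        exact absurd (⟨u'', fun v => le_trans (hu'' v) (by omega)⟩ : (1:ℕ) ∈ R) hr1
      · rw [he] at hmem
        exact absurd hmem hr1
      · exact he
    · right
      exact hdb
  · intro h
    have key : 3 ∈ S ∧ 2 ∉ S := by
      rcases h with hrad | hdb
      · rw [hRdef] at hrad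
        have hRne : R.Nonempty := by
          by_contra hc
          rw [Set.not_nonempty_iff_eq_empty] at hc
          rw [hc] at hrad
          simp [Nat.sInf_empty] at hrad
        have hmem := Nat.sInf_mem hRne
        rw [hrad] at hmem
        obtain ⟨u, hu⟩ := hmem
        have h1R : (1 : ℕ) ∉ R := by
          intro hc
          have := Nat.sInf_le hc
          omega
        have hw : ∃ w, w ≠ u ∧ ¬T.Adj u w := by
          by_contra hc
          push_neg at hc
          refine h1R ⟨u, fun v => ?_⟩
          by_cases hvu : v = u
          · simp [hvu, SimpleGraph.dist_self]
          · exact EC.dist_le_one_of_adj (hc v hvu)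
        obtain ⟨w, hw1, hw2⟩ := hw
        obtain ⟨c, hp, hs, hcm⟩ := EC.mem3_radius hT hcard u w hu hw1 hw2
        refine ⟨⟨c, hp, hs, hcm⟩, ?_⟩
        intro h2S
        obtain ⟨u', hu'⟩ := h2star.mp h2S
        exact h1R (hone_rad u' hu')
      · obtain ⟨c, hp, hs, hcm⟩ := EC.mem3_db hT hdb
        exact ⟨⟨c, hp, hs, hcm⟩, fun h2S => EC.not_star_of_db hdb (h2star.mp h2S)⟩
    obtain ⟨h3, h2⟩ := key
    rw [hSdef]
    have hle := Nat.sInf_le h3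
    have hmem := Nat.sInf_mem (⟨3, h3⟩ : S.Nonempty)
    rcases (by omega : sInf S = 0 ∨ sInf S = 1 ∨ sInf S = 2 ∨ sInf S = 3) with he | he | he | he
    · rw [he] at hmem; exact absurd hmem h0
    · rw [he] at hmem; exact absurd hmem h1
    · rw [he] at hmem; exact absurd hmem h2
    · exact he
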